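/- Let e_k^κ denote the action of the full symmetrizer e_k = (1/k!)∑_{σ∈S_k} σ on ℂ[Y_1,...,Y_k] via the Demazure-type action σ_i ↦ P_{i,i+1} + κ(1−P_{i,i+1})/(Y_i−Y_{i+1}). Then for any polynomial f, (e_k^κ f)(Y_1,...,Y_k) = (1/k!) ∑_{σ∈S_k} ∏_{i<j} ((Y_{σ(i)} − Y_{σ(j)} + κ)/(Y_{σ(i)} − Y_{σ(j)})) · f(Y_{σ(1)},...,Y_{σ(k)}). -/

import Mathlib

open MvPolynomial Finset

set_option synthInstance.maxHeartbeats 1000000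
set_option maxHeartbeats 1000000

/-- The field of rational functions in the variables `Y 1, …, Y k` over `ℂ`. -/
abbrev RatField (k : ℕ) : Type := FractionRing (MvPolynomial (Fin k) ℂ)

/-- The variable `Y i`, viewed in the field of rational functions. -/
noncomputable def Yv {k : ℕ} (i : Fin k) : RatField k :=
  algebraMap (MvPolynomial (Fin k) ℂ) (RatField k) (X i)

/-- The substitution `Y i ↦ Y (g i)` for a permutation `g`. -/
noncomputable def permMap {k : ℕ} (g : Equiv.Perm (Fin k)) :
    RatField k →+* RatField k :=
  IsFractionRing.lift
    (g := (algebraMap (MvPolynomial (Fin k) ℂ) (RatField k)).comp (rename g).toRingHom)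
    (by
      exact (IsFractionRing.injective (MvPolynomial (Fin k) ℂ) (RatField k)).comp
        (rename_injective _ g.injective))

/-- The Demazure-type operator `σ^κ_{ab} f = P_{ab} f + κ (f - P_{ab} f)/(Y a - Y b)`. -/
noncomputable def Dem {k : ℕ} (κ : ℂ) (a b : Fin k) (f : RatField k) : RatField k :=
  permMap (Equiv.swap a b) f +
    algebraMap (MvPolynomial (Fin k) ℂ) (RatField k) (C κ) *
      (f - permMap (Equiv.swap a b) f) / (Yv a - Yv b)


-- Part 1 : permMap lemmas

lemma algInj (k : ℕ) :
    Function.Injective (algebraMap (MvPolynomial (Fin k) ℂ) (RatField k)) :=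
  IsFractionRing.injective _ _

lemma permMap_algebraMap {k : ℕ} (g : Equiv.Perm (Fin k)) (p : MvPolynomial (Fin k) ℂ) :
    permMap g (algebraMap (MvPolynomial (Fin k) ℂ) (RatField k) p)
      = algebraMap (MvPolynomial (Fin k) ℂ) (RatField k) (rename g p) := by
  unfold permMap
  rw [IsFractionRing.lift_algebraMap]
  rfl

lemma permMap_Yv {k : ℕ} (g : Equiv.Perm (Fin k)) (i : Fin k) :
    permMap g (Yv i) = Yv (g i) := by
  unfold Yv
  rw [permMap_algebraMap, rename_X]

lemma permMap_CC {k : ℕ} (g : Equiv.Perm (Fin k)) (κ : ℂ) :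
    permMap g (algebraMap (MvPolynomial (Fin k) ℂ) (RatField k) (C κ))
      = algebraMap (MvPolynomial (Fin k) ℂ) (RatField k) (C κ) := by
  rw [permMap_algebraMap, rename_C]

lemma permMap_one {k : ℕ} (x : RatField k) : permMap 1 x = x := by
  have : permMap (k := k) 1 = RingHom.id (RatField k) := by
    apply IsLocalization.ringHom_ext (nonZeroDivisors (MvPolynomial (Fin k) ℂ))
    ext p
    · simp only [RingHom.comp_apply, permMap_algebraMap, rename_C, RingHom.id_apply]
    · simp only [RingHom.comp_apply, permMap_algebraMap, rename_X, Equiv.Perm.coe_one,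
        id_eq, RingHom.id_apply]
  rw [this]; rfl

lemma permMap_mul {k : ℕ} (g h : Equiv.Perm (Fin k)) (x : RatField k) :
    permMap g (permMap h x) = permMap (g * h) x := by
  have : (permMap g).comp (permMap h) = permMap (g * h) := by
    apply IsLocalization.ringHom_ext (nonZeroDivisors (MvPolynomial (Fin k) ℂ))
    ext p
    · simp only [RingHom.comp_apply, permMap_algebraMap, rename_C]
    · simp only [RingHom.comp_apply, permMap_algebraMap, rename_X, Equiv.Perm.coe_mul,
        Function.comp_apply]
  rw [← this]; rfl

-- Part 2 : nonvanishing
lemma X_sub_X_add_C_ne {k : ℕ} {i j : Fin k} (h : i ≠ j) (c : ℂ) :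
    (X i - X j + C c : MvPolynomial (Fin k) ℂ) ≠ 0 := by
  intro hc
  have := congrArg (coeff (Finsupp.single i 1)) hc
  rw [coeff_add, coeff_sub, coeff_X, if_pos rfl, coeff_X', coeff_C] at this
  rw [if_neg (by
        intro hs
        exact h (Finsupp.single_left_injective one_ne_zero hs).symm),
      if_neg (by
        intro hs
        exact one_ne_zero (α := ℕ) (Finsupp.single_eq_zero.mp hs.symm))] at this
  simp at this

lemma Yv_sub_add_C_ne {k : ℕ} {i j : Fin k} (h : i ≠ j) (c : ℂ) :
    Yv i - Yv j + algebraMap (MvPolynomial (Fin k) ℂ) (RatField k) (C c) ≠ 0 := by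
  have : Yv i - Yv j + algebraMap (MvPolynomial (Fin k) ℂ) (RatField k) (C c)
      = algebraMap (MvPolynomial (Fin k) ℂ) (RatField k) (X i - X j + C c) := by
    rw [Yv, Yv, ← map_sub, ← map_add]
  rw [this]
  exact fun hc => X_sub_X_add_C_ne h c (algInj k (by simpa using hc))

lemma Yv_sub_ne {k : ℕ} {i j : Fin k} (h : i ≠ j) : Yv i - Yv j ≠ 0 := by
  have := Yv_sub_add_C_ne h 0
  simpa using this

-- Part 3 : pair combinatorics

def pairsF (k : ℕ) : Finset (Fin k × Fin k) := Finset.univ.filter fun q => q.1 < q.2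

lemma mem_pairsF {k : ℕ} {q : Fin k × Fin k} : q ∈ pairsF k ↔ q.1 < q.2 := by
  simp [pairsF]

lemma swap_lt_swap {k : ℕ} {a b : Fin k} (hab : (a : ℕ) + 1 = (b : ℕ))
    {p q : Fin k} (hpq : p < q) (hne : (p, q) ≠ (a, b)) :
    Equiv.swap a b p < Equiv.swap a b q := by
  have hpq' : (p : ℕ) < (q : ℕ) := hpq
  have hne' : (p : ℕ) ≠ (a : ℕ) ∨ (q : ℕ) ≠ (b : ℕ) := by
    by_contra hc
    push_neg at hc
    exact hne (Prod.ext (Fin.ext hc.1) (Fin.ext hc.2))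
  rw [Fin.lt_def]
  by_cases hpa : (p : ℕ) = (a : ℕ)
  · have hpa' : p = a := Fin.ext hpa
    have hqb : (q : ℕ) ≠ (b : ℕ) := by
      rcases hne' with h | h
      · exact absurd hpa h
      · exact h
    have hqa : q ≠ a := fun h => absurd (congrArg Fin.val h) (by omega)
    have hqb' : q ≠ b := fun h => hqb (congrArg Fin.val h)
    rw [hpa', Equiv.swap_apply_left, Equiv.swap_apply_of_ne_of_ne hqa hqb']
    omega
  · by_cases hpb : (p : ℕ) = (b : ℕ)
    · have hpb' : p = b := Fin.ext hpb
      have hqa : q ≠ a := fun h => absurd (congrArg Fin.val h) (by omega)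
      have hqb' : q ≠ b := fun h => absurd (congrArg Fin.val h) (by omega)
      rw [hpb', Equiv.swap_apply_right, Equiv.swap_apply_of_ne_of_ne hqa hqb']
      omega
    · have hpa' : p ≠ a := fun h => hpa (congrArg Fin.val h)
      have hpb' : p ≠ b := fun h => hpb (congrArg Fin.val h)
      rw [Equiv.swap_apply_of_ne_of_ne hpa' hpb']
      by_cases hqa : (q : ℕ) = (a : ℕ)
      · have hqa' : q = a := Fin.ext hqa
        rw [hqa', Equiv.swap_apply_left]
        omega
      · by_cases hqb : (q : ℕ) = (b : ℕ)
        · have hqb' : q = b := Fin.ext hqb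
          rw [hqb', Equiv.swap_apply_right]
          omega
        · rw [Equiv.swap_apply_of_ne_of_ne (fun h => hqa (congrArg Fin.val h))
            (fun h => hqb (congrArg Fin.val h))]
          exact hpq'

lemma swap_mem_erase {k : ℕ} {a b : Fin k} (hab : (a : ℕ) + 1 = (b : ℕ))
    {q : Fin k × Fin k} (hq : q ∈ (pairsF k).erase (a, b)) :
    (Equiv.swap a b q.1, Equiv.swap a b q.2) ∈ (pairsF k).erase (a, b) := by
  rw [Finset.mem_erase] at hq ⊢
  obtain ⟨hne, hmem⟩ := hq
  rw [mem_pairsF] at hmem ⊢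
  refine ⟨?_, swap_lt_swap hab hmem (by simpa [Prod.ext_iff] using hne)⟩
  intro hc
  rw [Prod.ext_iff] at hc
  obtain ⟨h1, h2⟩ := hc
  have h1' : q.1 = b := by
    have := congrArg (Equiv.swap a b) h1
    rwa [Equiv.swap_apply_self, Equiv.swap_apply_left] at this
  have h2' : q.2 = a := by
    have := congrArg (Equiv.swap a b) h2
    rwa [Equiv.swap_apply_self, Equiv.swap_apply_right] at this
  have : (q.1 : ℕ) < (q.2 : ℕ) := hmem
  rw [h1', h2'] at this
  omega

lemma prod_pairs_swap {k : ℕ} {M : Type*} [CommMonoid M] (t : Fin k → Fin k → M)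
    (a b : Fin k) (hab : (a : ℕ) + 1 = (b : ℕ)) :
    (∏ q ∈ pairsF k, t (Equiv.swap a b q.1) (Equiv.swap a b q.2)) * t a b
      = t b a * ∏ q ∈ pairsF k, t q.1 q.2 := by
  have hlt : a < b := Fin.lt_def.mpr (by omega)
  have hmem : (a, b) ∈ pairsF k := mem_pairsF.mpr hlt
  have key : ∏ q ∈ (pairsF k).erase (a, b), t (Equiv.swap a b q.1) (Equiv.swap a b q.2)
      = ∏ q ∈ (pairsF k).erase (a, b), t q.1 q.2 := by
    refine Finset.prod_nbij' (fun q => (Equiv.swap a b q.1, Equiv.swap a b q.2))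
      (fun q => (Equiv.swap a b q.1, Equiv.swap a b q.2))
      (fun q hq => swap_mem_erase hab hq) (fun q hq => swap_mem_erase hab hq)
      (fun q _ => by simp [Equiv.swap_apply_self]) (fun q _ => by simp [Equiv.swap_apply_self])
      (fun q _ => rfl)
  calc (∏ q ∈ pairsF k, t (Equiv.swap a b q.1) (Equiv.swap a b q.2)) * t a b
      = ((∏ q ∈ (pairsF k).erase (a, b), t (Equiv.swap a b q.1) (Equiv.swap a b q.2))
          * t (Equiv.swap a b a) (Equiv.swap a b b)) * t a b := by
        rw [Finset.prod_erase_mul _ _ hmem]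
    _ = ((∏ q ∈ (pairsF k).erase (a, b), t q.1 q.2) * t b a) * t a b := by
        rw [key, Equiv.swap_apply_left, Equiv.swap_apply_right]
    _ = t b a * ((∏ q ∈ (pairsF k).erase (a, b), t q.1 q.2) * t a b) := by
        rw [mul_right_comm]
        rw [mul_comm _ (t b a)]
    _ = t b a * ∏ q ∈ pairsF k, t q.1 q.2 := by rw [Finset.prod_erase_mul _ _ hmem]

lemma prod_pairs_succ {M : Type*} [CommMonoid M] (k : ℕ) (t : Fin (k+1) → Fin (k+1) → M) :
    ∏ q ∈ pairsF (k+1), t q.1 q.2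
      = (∏ j : Fin k, t 0 j.succ) * ∏ q ∈ pairsF k, t q.1.succ q.2.succ := by
  classical
  have hunion : pairsF (k+1)
      = (Finset.univ.image fun j : Fin k => ((0 : Fin (k+1)), j.succ))
        ∪ (pairsF k).image (fun q => (q.1.succ, q.2.succ)) := by
    ext q
    simp only [mem_pairsF, Finset.mem_union, Finset.mem_image, Finset.mem_univ, true_and]
    constructor
    · intro hq
      rcases Fin.eq_zero_or_eq_succ q.1 with h1 | ⟨i, h1⟩
      · rcases Fin.eq_zero_or_eq_succ q.2 with h2 | ⟨j, h2⟩
        · rw [h1, h2] at hq; exact absurd hq (lt_irrefl _)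
        · exact Or.inl ⟨j, by rw [← h1, ← h2]⟩
      · rcases Fin.eq_zero_or_eq_succ q.2 with h2 | ⟨j, h2⟩
        · rw [h1, h2] at hq; exact absurd hq (Fin.not_lt_zero _)
        · refine Or.inr ⟨(i, j), ?_, by rw [← h1, ← h2]⟩
          rw [h1, h2] at hq
          exact Fin.succ_lt_succ_iff.mp hq
    · rintro (⟨j, rfl⟩ | ⟨r, hr, rfl⟩)
      · exact Fin.succ_pos j
      · exact Fin.succ_lt_succ_iff.mpr hr
  have hdisj : Disjoint (Finset.univ.image fun j : Fin k => ((0 : Fin (k+1)), j.succ))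
      ((pairsF k).image (fun q => (q.1.succ, q.2.succ))) := by
    rw [Finset.disjoint_left]
    rintro q hq1 hq2
    simp only [Finset.mem_image, Finset.mem_univ, true_and] at hq1 hq2
    obtain ⟨j, rfl⟩ := hq1
    obtain ⟨r, _, hr⟩ := hq2
    have := congrArg Prod.fst hr
    exact Fin.succ_ne_zero r.1 this
  rw [hunion, Finset.prod_union hdisj, Finset.prod_image, Finset.prod_image]
  · intro x _ y _ hxy
    rw [Prod.ext_iff] at hxy
    exact Prod.ext (Fin.succ_injective _ hxy.1) (Fin.succ_injective _ hxy.2)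
  · intro x _ y _ hxy
    exact Fin.succ_injective _ (congrArg Prod.snd hxy)

-- Part 4 : Lagrange identity
open Polynomial in
lemma lagrange_sum {F : Type*} [Field F] (κ : F) (k : ℕ) (y : Fin (k+1) → F)
    (hy : Function.Injective y) :
    ∑ p : Fin (k+1), ∏ m ∈ Finset.univ.erase p, ((y p - y m + κ) / (y p - y m))
      = ((k : F) + 1) := by
  have hsub : ∀ {p m : Fin (k+1)}, p ≠ m → y p - y m ≠ 0 :=
    fun h => sub_ne_zero.mpr (fun hc => h (hy hc))
  rcases eq_or_ne κ 0 with rfl | hκ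
  · have h1 : ∀ p : Fin (k+1), ∏ m ∈ Finset.univ.erase p, ((y p - y m + 0) / (y p - y m))
        = 1 := by
      intro p
      rw [Finset.prod_congr rfl (fun m hm => ?_), Finset.prod_const_one]
      rw [add_zero, div_self (hsub (Finset.ne_of_mem_erase hm).symm)]
    rw [Finset.sum_congr rfl (fun p _ => h1 p), Finset.sum_const]
    simp
  · set G : Fin (k+1) → F := fun p => ∏ m ∈ Finset.univ.erase p, ((y p - y m + κ) / (y p - y m))
      with hG
    have hGprod : ∀ p, G p * ∏ m ∈ Finset.univ.erase p, (y p - y m)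
        = ∏ m ∈ Finset.univ.erase p, (y p - y m + κ) := by
      intro p
      rw [hG, ← Finset.prod_mul_distrib]
      refine Finset.prod_congr rfl (fun m hm => ?_)
      rw [div_mul_cancel₀ _ (hsub (Finset.ne_of_mem_erase hm).symm)]
    set P1 : F[X] := ∏ m : Fin (k+1), (Polynomial.X - Polynomial.C (y m - κ)) with hP1
    set P2 : F[X] := ∏ m : Fin (k+1), (Polynomial.X - Polynomial.C (y m)) with hP2
    set Q : F[X] := ∑ p : Fin (k+1), Polynomial.C (κ * G p) * ∏ m ∈ Finset.univ.erase p, (Polynomial.X - Polynomial.C (y m))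
      with hQ
    have hmon1 : P1.Monic := monic_prod_of_monic _ _ (fun m _ => monic_X_sub_C _)
    have hmon2 : P2.Monic := monic_prod_of_monic _ _ (fun m _ => monic_X_sub_C _)
    have hmonR : ∀ p : Fin (k+1),
        (∏ m ∈ Finset.univ.erase p, (Polynomial.X - Polynomial.C (y m)) : F[X]).Monic :=
      fun p => monic_prod_of_monic _ _ (fun m _ => monic_X_sub_C _)
    have hdeg1 : P1.natDegree = k + 1 := by
      rw [hP1, natDegree_prod _ _ (fun m _ => X_sub_C_ne_zero _)]
      simp only [natDegree_X_sub_C, Finset.sum_const, smul_eq_mul, mul_one, Finset.card_univ,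
        Fintype.card_fin]
    have hdeg2 : P2.natDegree = k + 1 := by
      rw [hP2, natDegree_prod _ _ (fun m _ => X_sub_C_ne_zero _)]
      simp only [natDegree_X_sub_C, Finset.sum_const, smul_eq_mul, mul_one, Finset.card_univ,
        Fintype.card_fin]
    have hdegR : ∀ p : Fin (k+1),
        (∏ m ∈ Finset.univ.erase p, (Polynomial.X - Polynomial.C (y m)) : F[X]).natDegree = k := by
      intro p
      rw [natDegree_prod _ _ (fun m _ => X_sub_C_ne_zero _)]
      simp only [natDegree_X_sub_C, Finset.sum_const, smul_eq_mul, mul_one]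
      rw [Finset.card_erase_of_mem (Finset.mem_univ p), Finset.card_univ, Fintype.card_fin]
      omega
    have hd12 : (P1 - P2).degree < ((k + 1 : ℕ) : WithBot ℕ) := by
      have heq : P1.degree = P2.degree := by
        rw [degree_eq_natDegree hmon1.ne_zero, degree_eq_natDegree hmon2.ne_zero, hdeg1, hdeg2]
      have := degree_sub_lt heq hmon1.ne_zero
        (by rw [hmon1.leadingCoeff, hmon2.leadingCoeff])
      rwa [degree_eq_natDegree hmon1.ne_zero, hdeg1] at this
    have hdQ : Q.degree < ((k + 1 : ℕ) : WithBot ℕ) := by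
      have hnQ : Q.natDegree ≤ k := by
        refine natDegree_sum_le_of_forall_le _ _ (fun p _ => ?_)
        refine le_trans (natDegree_mul_le) ?_
        rw [natDegree_C, hdegR p, zero_add]
      calc Q.degree ≤ (Q.natDegree : WithBot ℕ) := degree_le_natDegree
        _ ≤ ((k : ℕ) : WithBot ℕ) := by exact_mod_cast hnQ
        _ < ((k + 1 : ℕ) : WithBot ℕ) := by exact_mod_cast Nat.lt_succ_self k
    have hevalP1 : ∀ p : Fin (k+1), P1.eval (y p)
        = κ * ∏ m ∈ Finset.univ.erase p, (y p - y m + κ) := by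
      intro p
      rw [hP1, Polynomial.eval_prod]
      rw [← Finset.mul_prod_erase _ _ (Finset.mem_univ p)]
      congr 1
      · simp
      · refine Finset.prod_congr rfl (fun m _ => ?_)
        simp only [Polynomial.eval_sub, Polynomial.eval_X, Polynomial.eval_C]
        ring
    have hevalP2 : ∀ p : Fin (k+1), P2.eval (y p) = 0 := by
      intro p
      rw [hP2, Polynomial.eval_prod]
      refine Finset.prod_eq_zero (Finset.mem_univ p) ?_
      simp
    have hevalQ : ∀ p : Fin (k+1), Q.eval (y p)
        = κ * ∏ m ∈ Finset.univ.erase p, (y p - y m + κ) := by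
      intro p
      rw [hQ, Polynomial.eval_finset_sum]
      rw [Finset.sum_eq_single p ?h1 ?h2]
      · rw [Polynomial.eval_mul, Polynomial.eval_C, Polynomial.eval_prod]
        have : ∏ m ∈ Finset.univ.erase p, ((Polynomial.X - Polynomial.C (y m) : F[X]).eval (y p))
            = ∏ m ∈ Finset.univ.erase p, (y p - y m) := by
          refine Finset.prod_congr rfl (fun m _ => ?_)
          simp
        rw [this, mul_assoc, hGprod p]
      case h1 =>
        intro p' _ hp'
        rw [Polynomial.eval_mul, Polynomial.eval_prod]
        have : ((Polynomial.X - Polynomial.C (y p) : F[X]).eval (y p)) = 0 := by simp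
        rw [Finset.prod_eq_zero (Finset.mem_erase.mpr ⟨hp'.symm, Finset.mem_univ p⟩) this,
          mul_zero]
      case h2 =>
        intro h
        exact absurd (Finset.mem_univ p) h
    have hD : P1 - P2 - Q = 0 := by
      by_cases hD0 : P1 - P2 - Q = 0
      · exact hD0
      · refine eq_zero_of_natDegree_lt_card_of_eval_eq_zero _ hy (fun p => ?_) ?_
        · rw [Polynomial.eval_sub, Polynomial.eval_sub, hevalP1 p, hevalP2 p, hevalQ p]
          ring
        · rw [Fintype.card_fin]
          rw [Polynomial.natDegree_lt_iff_degree_lt hD0]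
          calc (P1 - P2 - Q).degree ≤ max (P1 - P2).degree Q.degree := Polynomial.degree_sub_le _ _
            _ < ((k + 1 : ℕ) : WithBot ℕ) := max_lt hd12 hdQ
    have hQeq : P1 - P2 = Q := by
      have := sub_eq_zero.mp hD
      linear_combination (norm := ring_nf) this
    -- compare coefficients of degree k
    have hc1 : P1.coeff k = ∑ m : Fin (k+1), (κ - y m) := by
      have h0 : 0 < P1.natDegree := by rw [hdeg1]; omega
      have : P1.coeff k = P1.nextCoeff := by
        rw [Polynomial.nextCoeff_of_natDegree_pos h0, hdeg1]
        norm_num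
      rw [this, hP1, Monic.nextCoeff_prod _ _ (fun m _ => monic_X_sub_C _)]
      refine Finset.sum_congr rfl (fun m _ => ?_)
      rw [Polynomial.nextCoeff_X_sub_C]
      ring
    have hc2 : P2.coeff k = ∑ m : Fin (k+1), (- y m) := by
      have h0 : 0 < P2.natDegree := by rw [hdeg2]; omega
      have : P2.coeff k = P2.nextCoeff := by
        rw [Polynomial.nextCoeff_of_natDegree_pos h0, hdeg2]
        norm_num
      rw [this, hP2, Monic.nextCoeff_prod _ _ (fun m _ => monic_X_sub_C _)]
      exact Finset.sum_congr rfl (fun m _ => Polynomial.nextCoeff_X_sub_C _)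
    have hcQ : Q.coeff k = ∑ p : Fin (k+1), κ * G p := by
      rw [hQ, Polynomial.finset_sum_coeff]
      refine Finset.sum_congr rfl (fun p _ => ?_)
      rw [Polynomial.coeff_C_mul]
      have : (∏ m ∈ Finset.univ.erase p, (Polynomial.X - Polynomial.C (y m) : F[X])).coeff k = 1 := by
        have := (hmonR p).coeff_natDegree
        rwa [hdegR p] at this
      rw [this, mul_one]
    have hfin : P1.coeff k - P2.coeff k = Q.coeff k := by
      rw [← Polynomial.coeff_sub, hQeq]
    rw [hc1, hc2, hcQ, ← Finset.mul_sum] at hfin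
    have hL : (∑ m : Fin (k+1), (κ - y m)) - ∑ m : Fin (k+1), (- y m) = ((k : F) + 1) * κ := by
      simp only [Finset.sum_sub_distrib, Finset.sum_neg_distrib, Finset.sum_const,
        Finset.card_univ, Fintype.card_fin, nsmul_eq_mul]
      push_cast
      ring
    have hmain : κ * ∑ p : Fin (k+1), G p = κ * ((k : F) + 1) := by
      rw [← hfin, hL]
      ring
    exact mul_left_cancel₀ hκ hmain

-- Part 5 : the normalization identity
lemma sum_Acoef {F : Type*} [Field F] (κ : F) :
    ∀ (k : ℕ) (y : Fin k → F), Function.Injective y →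
      ∑ σ : Equiv.Perm (Fin k), ∏ q ∈ pairsF k,
        ((y (σ q.1) - y (σ q.2) + κ) / (y (σ q.1) - y (σ q.2)))
        = (k.factorial : F) := by
  intro k
  induction k with
  | zero =>
    intro y _
    have hp : pairsF 0 = ∅ := Finset.eq_empty_of_forall_notMem (fun q _ => q.1.elim0)
    rw [Finset.sum_congr rfl (fun σ _ => by rw [hp, Finset.prod_empty])]
    rw [Finset.sum_const, Finset.card_univ, Fintype.card_perm, Fintype.card_fin]
    simp
  | succ k ih =>
    intro y hy
    rw [← Equiv.sum_comp (Equiv.Perm.decomposeFin.symm)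
      (fun σ : Equiv.Perm (Fin (k+1)) => ∏ q ∈ pairsF (k+1),
        ((y (σ q.1) - y (σ q.2) + κ) / (y (σ q.1) - y (σ q.2)))), Fintype.sum_prod_type]
    have key : ∀ (p : Fin (k+1)) (e : Equiv.Perm (Fin k)),
        (∏ q ∈ pairsF (k+1),
          ((y (Equiv.Perm.decomposeFin.symm (p, e) q.1)
              - y (Equiv.Perm.decomposeFin.symm (p, e) q.2) + κ)
            / (y (Equiv.Perm.decomposeFin.symm (p, e) q.1)
              - y (Equiv.Perm.decomposeFin.symm (p, e) q.2))))
        = (∏ m ∈ Finset.univ.erase p, ((y p - y m + κ) / (y p - y m)))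
          * ∏ q ∈ pairsF k,
              ((y (Equiv.swap 0 p (e q.1).succ) - y (Equiv.swap 0 p (e q.2).succ) + κ)
                / (y (Equiv.swap 0 p (e q.1).succ) - y (Equiv.swap 0 p (e q.2).succ))) := by
      intro p e
      refine (prod_pairs_succ k (fun u v =>
        ((y (Equiv.Perm.decomposeFin.symm (p, e) u)
            - y (Equiv.Perm.decomposeFin.symm (p, e) v) + κ)
          / (y (Equiv.Perm.decomposeFin.symm (p, e) u)
            - y (Equiv.Perm.decomposeFin.symm (p, e) v))))).trans ?_
      simp only [Equiv.Perm.decomposeFin_symm_apply_zero,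
        Equiv.Perm.decomposeFin_symm_apply_succ]
      congr 1
      refine Finset.prod_bij (fun j _ => Equiv.swap 0 p (e j).succ) ?_ ?_ ?_ ?_
      · intro j _
        refine Finset.mem_erase.mpr ⟨?_, Finset.mem_univ _⟩
        intro hc
        have h2 := congrArg (Equiv.swap 0 p) hc
        rw [Equiv.swap_apply_self, Equiv.swap_apply_right] at h2
        exact Fin.succ_ne_zero _ h2
      · intro j _ j' _ hjj'
        exact e.injective (Fin.succ_injective _ ((Equiv.swap 0 p).injective hjj'))
      · intro m hm
        have hm' : m ≠ p := Finset.ne_of_mem_erase hm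
        have h0 : Equiv.swap 0 p m ≠ 0 := by
          intro hc
          have h2 := congrArg (Equiv.swap 0 p) hc
          rw [Equiv.swap_apply_self, Equiv.swap_apply_left] at h2
          exact hm' h2
        refine ⟨e.symm ((Equiv.swap 0 p m).pred h0), Finset.mem_univ _, ?_⟩
        show Equiv.swap 0 p (e (e.symm ((Equiv.swap 0 p m).pred h0))).succ = m
        rw [Equiv.apply_symm_apply, Fin.succ_pred, Equiv.swap_apply_self]
      · intro j _
        rfl
    rw [Finset.sum_congr rfl (fun p _ => Finset.sum_congr rfl (fun e _ => key p e))]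
    have hin : ∀ p : Fin (k+1),
        Function.Injective (fun j : Fin k => y (Equiv.swap 0 p j.succ)) := by
      intro p j j' h
      exact Fin.succ_injective _ ((Equiv.swap 0 p).injective (hy h))
    have inner : ∀ p : Fin (k+1),
        ∑ e : Equiv.Perm (Fin k),
          (∏ m ∈ Finset.univ.erase p, ((y p - y m + κ) / (y p - y m)))
            * ∏ q ∈ pairsF k,
                ((y (Equiv.swap 0 p (e q.1).succ) - y (Equiv.swap 0 p (e q.2).succ) + κ)
                  / (y (Equiv.swap 0 p (e q.1).succ) - y (Equiv.swap 0 p (e q.2).succ)))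
          = (∏ m ∈ Finset.univ.erase p, ((y p - y m + κ) / (y p - y m)))
              * (k.factorial : F) := by
      intro p
      rw [← Finset.mul_sum, ih (fun j => y (Equiv.swap 0 p j.succ)) (hin p)]
    rw [Finset.sum_congr rfl (fun p _ => inner p)]
    rw [← Finset.sum_mul, lagrange_sum κ k y hy, Nat.factorial_succ]
    push_cast
    ring

-- Part 6 : the operators and assembly

noncomputable def Acoef (k : ℕ) (κ : ℂ) (σ : Equiv.Perm (Fin k)) : RatField k :=
  ∏ q ∈ pairsF k,
    ((Yv (σ q.1) - Yv (σ q.2) + algebraMap (MvPolynomial (Fin k) ℂ) (RatField k) (C κ)) /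
      (Yv (σ q.1) - Yv (σ q.2)))

noncomputable def Fop (k : ℕ) (κ : ℂ) (f : RatField k) : RatField k :=
  ∑ σ : Equiv.Perm (Fin k), Acoef k κ σ * permMap σ f

def adjSet (k : ℕ) : Set (Equiv.Perm (Fin k)) :=
  {s | ∃ a b : Fin k, (a : ℕ) + 1 = (b : ℕ) ∧ s = Equiv.swap a b}

lemma adjClosure (k : ℕ) : Submonoid.closure (adjSet k) = ⊤ := by
  cases k with
  | zero =>
    refine (Submonoid.eq_top_iff' _).mpr (fun σ => ?_)
    have : σ = 1 := Equiv.ext (fun x => x.elim0)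
    rw [this]
    exact Submonoid.one_mem _
  | succ n =>
    refine top_unique ?_
    rw [← Equiv.Perm.mclosure_swap_castSucc_succ n]
    refine Submonoid.closure_le.mpr ?_
    rintro s ⟨i, rfl⟩
    exact Submonoid.subset_closure ⟨i.castSucc, i.succ, by simp, rfl⟩

lemma perm_induction {k : ℕ} (P : Equiv.Perm (Fin k) → Prop)
    (h1 : P 1)
    (hm : ∀ g h, P g → P h → P (g * h))
    (hadj : ∀ a b : Fin k, (a : ℕ) + 1 = (b : ℕ) → P (Equiv.swap a b)) :
    ∀ σ, P σ := by
  intro σ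
  have hσ : σ ∈ Submonoid.closure (adjSet k) := by rw [adjClosure k]; trivial
  exact Submonoid.closure_induction (motive := fun x _ => P x)
    (fun x hx => by obtain ⟨a, b, hab, rfl⟩ := hx; exact hadj a b hab)
    h1 (fun x y _ _ px py => hm x y px py) hσ

lemma Dem_eq {k : ℕ} (κ : ℂ) (a b : Fin k) (f : RatField k) :
    Dem κ a b f
      = (1 - algebraMap (MvPolynomial (Fin k) ℂ) (RatField k) (C κ) / (Yv a - Yv b)) *
          permMap (Equiv.swap a b) f
        + (algebraMap (MvPolynomial (Fin k) ℂ) (RatField k) (C κ) / (Yv a - Yv b)) * f := by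
  unfold Dem
  ring

lemma Dem_sum {k : ℕ} (κ : ℂ) (a b : Fin k) {ι : Type*} (s : Finset ι)
    (g : ι → RatField k) :
    Dem κ a b (∑ i ∈ s, g i) = ∑ i ∈ s, Dem κ a b (g i) := by
  rw [Dem_eq, map_sum, Finset.mul_sum, Finset.mul_sum, ← Finset.sum_add_distrib]
  exact Finset.sum_congr rfl (fun i _ => (Dem_eq κ a b (g i)).symm)

lemma Dem_fix {k : ℕ} (κ : ℂ) (a b : Fin k) {f : RatField k}
    (h : permMap (Equiv.swap a b) f = f) : Dem κ a b f = f := by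
  unfold Dem
  rw [h, sub_self, mul_zero, zero_div, add_zero]

lemma fix_of_Dem_fix {k : ℕ} (κ : ℂ) {a b : Fin k} (hab : a ≠ b) {f : RatField k}
    (h : Dem κ a b f = f) : permMap (Equiv.swap a b) f = f := by
  set cc := algebraMap (MvPolynomial (Fin k) ℂ) (RatField k) (C κ) with hcc
  have hu : Yv a - Yv b ≠ 0 := Yv_sub_ne hab
  have huc : Yv a - Yv b - cc ≠ 0 := by
    have := Yv_sub_add_C_ne hab (-κ)
    rwa [map_neg, map_neg, ← sub_eq_add_neg] at this
  have h2 : (1 - cc / (Yv a - Yv b)) * (permMap (Equiv.swap a b) f - f) = 0 := by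
    rw [Dem_eq] at h
    linear_combination h
  have hw : 1 - cc / (Yv a - Yv b) ≠ 0 := by
    intro hc
    apply huc
    have : Yv a - Yv b - cc = (1 - cc / (Yv a - Yv b)) * (Yv a - Yv b) := by
      field_simp
    rw [this, hc, zero_mul]
  have := (mul_eq_zero.mp h2).resolve_left hw
  exact sub_eq_zero.mp this

lemma permMap_Acoef {k : ℕ} (κ : ℂ) (g σ : Equiv.Perm (Fin k)) :
    permMap g (Acoef k κ σ) = Acoef k κ (g * σ) := by
  unfold Acoef
  rw [map_prod]
  refine Finset.prod_congr rfl (fun q _ => ?_)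
  simp only [map_div₀, map_add, map_sub, permMap_Yv, permMap_CC, Equiv.Perm.mul_apply]

lemma permMap_Fop {k : ℕ} (κ : ℂ) (g : Equiv.Perm (Fin k)) (f : RatField k) :
    permMap g (Fop k κ f) = Fop k κ f := by
  unfold Fop
  rw [map_sum]
  rw [Finset.sum_congr rfl (fun σ _ => by
    rw [map_mul, permMap_Acoef, permMap_mul] :
      ∀ σ ∈ Finset.univ, permMap g (Acoef k κ σ * permMap σ f)
        = Acoef k κ (g * σ) * permMap (g * σ) f)]
  exact Equiv.sum_comp (Equiv.mulLeft g) (fun σ => Acoef k κ σ * permMap σ f)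

lemma Acoef_mul_swap {k : ℕ} (κ : ℂ) (σ : Equiv.Perm (Fin k)) {a b : Fin k}
    (hab : (a : ℕ) + 1 = (b : ℕ)) :
    Acoef k κ (σ * Equiv.swap a b) *
        ((Yv (σ a) - Yv (σ b) + algebraMap (MvPolynomial (Fin k) ℂ) (RatField k) (C κ)) /
          (Yv (σ a) - Yv (σ b)))
      = ((Yv (σ b) - Yv (σ a) + algebraMap (MvPolynomial (Fin k) ℂ) (RatField k) (C κ)) /
          (Yv (σ b) - Yv (σ a))) * Acoef k κ σ := by
  have h := prod_pairs_swap (fun u v : Fin k =>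
    ((Yv (σ u) - Yv (σ v) + algebraMap (MvPolynomial (Fin k) ℂ) (RatField k) (C κ)) /
      (Yv (σ u) - Yv (σ v)))) a b hab
  have hL : Acoef k κ (σ * Equiv.swap a b)
      = ∏ q ∈ pairsF k,
        ((Yv (σ (Equiv.swap a b q.1)) - Yv (σ (Equiv.swap a b q.2))
            + algebraMap (MvPolynomial (Fin k) ℂ) (RatField k) (C κ)) /
          (Yv (σ (Equiv.swap a b q.1)) - Yv (σ (Equiv.swap a b q.2)))) := by
    unfold Acoef
    exact Finset.prod_congr rfl (fun q _ => rfl)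
  rw [hL]
  unfold Acoef
  exact h

lemma Fop_Dem {k : ℕ} (κ : ℂ) {a b : Fin k} (hab : (a : ℕ) + 1 = (b : ℕ))
    (f : RatField k) : Fop k κ (Dem κ a b f) = Fop k κ f := by
  classical
  set cc := algebraMap (MvPolynomial (Fin k) ℂ) (RatField k) (C κ) with hcc
  have habne : a ≠ b := fun h => by simp [h] at hab
  set s := Equiv.swap a b with hs
  have hperm : ∀ σ : Equiv.Perm (Fin k), permMap σ (Dem κ a b f)
      = permMap (σ * s) f
        + cc * (permMap σ f - permMap (σ * s) f) / (Yv (σ a) - Yv (σ b)) := by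
    intro σ
    unfold Dem
    rw [map_add, map_div₀, map_mul, map_sub, map_sub, permMap_mul, permMap_Yv, permMap_Yv,
      ← hcc, permMap_CC, ← hcc]
  have step1 : Fop k κ (Dem κ a b f)
      = (∑ σ : Equiv.Perm (Fin k),
          (Acoef k κ σ * (1 - cc / (Yv (σ a) - Yv (σ b)))) * permMap (σ * s) f)
        + ∑ σ : Equiv.Perm (Fin k),
            (Acoef k κ σ * (cc / (Yv (σ a) - Yv (σ b)))) * permMap σ f := by
    unfold Fop
    rw [← Finset.sum_add_distrib]
    refine Finset.sum_congr rfl (fun σ _ => ?_)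
    rw [hperm σ]
    ring
  have step2 : ∑ σ : Equiv.Perm (Fin k),
      (Acoef k κ σ * (1 - cc / (Yv (σ a) - Yv (σ b)))) * permMap (σ * s) f
      = ∑ σ : Equiv.Perm (Fin k),
        (Acoef k κ (σ * s) * (1 - cc / (Yv (σ b) - Yv (σ a)))) * permMap σ f := by
    rw [← Equiv.sum_comp (Equiv.mulRight s) (fun σ =>
      (Acoef k κ σ * (1 - cc / (Yv (σ a) - Yv (σ b)))) * permMap (σ * s) f)]
    refine Finset.sum_congr rfl (fun σ _ => ?_)
    have h1 : (Equiv.mulRight s σ) * s = σ := by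
      simp [hs, mul_assoc]
    have h2 : (Equiv.mulRight s σ) a = σ b := by
      simp [hs, Equiv.Perm.mul_apply]
    have h3 : (Equiv.mulRight s σ) b = σ a := by
      simp [hs, Equiv.Perm.mul_apply]
    simp only [Equiv.coe_mulRight] at h1 h2 h3 ⊢
    rw [h1, h2, h3]
  have step3 : ∀ σ : Equiv.Perm (Fin k),
      Acoef k κ (σ * s) * (1 - cc / (Yv (σ b) - Yv (σ a)))
        + Acoef k κ σ * (cc / (Yv (σ a) - Yv (σ b))) = Acoef k κ σ := by
    intro σ
    have hu : Yv (σ a) - Yv (σ b) ≠ 0 := Yv_sub_ne (fun h => habne (σ.injective h))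
    have hv : Yv (σ b) - Yv (σ a) ≠ 0 := Yv_sub_ne (fun h => habne (σ.injective h).symm)
    have hA := Acoef_mul_swap κ σ hab
    rw [← hcc] at hA
    have hfold : (1 - cc / (Yv (σ b) - Yv (σ a)))
        = (Yv (σ a) - Yv (σ b) + cc) / (Yv (σ a) - Yv (σ b)) := by
      field_simp
      ring
    rw [hfold, hA]
    field_simp
    ring
  rw [step1, step2, ← Finset.sum_add_distrib]
  unfold Fop
  refine Finset.sum_congr rfl (fun σ _ => ?_)
  rw [← add_mul, step3 σ]

lemma Fop_sum {k : ℕ} (κ : ℂ) {ι : Type*} (s : Finset ι) (g : ι → RatField k) :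
    Fop k κ (∑ i ∈ s, g i) = ∑ i ∈ s, Fop k κ (g i) := by
  unfold Fop
  calc ∑ σ : Equiv.Perm (Fin k), Acoef k κ σ * permMap σ (∑ i ∈ s, g i)
      = ∑ σ : Equiv.Perm (Fin k), ∑ i ∈ s, Acoef k κ σ * permMap σ (g i) :=
        Finset.sum_congr rfl (fun σ _ => by rw [map_sum, Finset.mul_sum])
    _ = ∑ i ∈ s, ∑ σ : Equiv.Perm (Fin k), Acoef k κ σ * permMap σ (g i) := Finset.sum_comm


/-- Let `ρ` be the action of `S_k` in which each simple transposition
acts by the Demazure-type operator `σ_i^κ`, and let `e_k^κ` be the induced action of the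
full symmetrizer `e_k = (1/k!) ∑_{σ ∈ S_k} σ`.  Then for any polynomial `f`,
`e_k^κ f = (1/k!) ∑_{σ ∈ S_k} ∏_{i<j} ((Y_{σ(i)} − Y_{σ(j)} + κ)/(Y_{σ(i)} − Y_{σ(j)})) ·
f(Y_{σ(1)},…,Y_{σ(k)})`. -/
theorem statement4 (k : ℕ) (κ : ℂ)
    (ρ : Equiv.Perm (Fin k) → RatField k → RatField k)
    (hone : ρ 1 = id)
    (hmul : ∀ g h : Equiv.Perm (Fin k), ρ (g * h) = ρ g ∘ ρ h)
    (hgen : ∀ (i : ℕ) (h : i + 1 < k),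
      ρ (Equiv.swap ⟨i, by omega⟩ ⟨i + 1, h⟩) = Dem κ ⟨i, by omega⟩ ⟨i + 1, h⟩)
    (p : MvPolynomial (Fin k) ℂ) :
    ((k.factorial : RatField k))⁻¹ *
        ∑ σ : Equiv.Perm (Fin k),
          ρ σ (algebraMap (MvPolynomial (Fin k) ℂ) (RatField k) p) =
      ((k.factorial : RatField k))⁻¹ *
        ∑ σ : Equiv.Perm (Fin k),
          (∏ q ∈ Finset.univ.filter fun q : Fin k × Fin k => q.1 < q.2,
            ((Yv (σ q.1) - Yv (σ q.2) +
                algebraMap (MvPolynomial (Fin k) ℂ) (RatField k) (C κ)) /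
              (Yv (σ q.1) - Yv (σ q.2)))) *
            permMap σ (algebraMap (MvPolynomial (Fin k) ℂ) (RatField k) p) := by
  classical
  set f := algebraMap (MvPolynomial (Fin k) ℂ) (RatField k) p with hf
  have hFop : Fop k κ f = ∑ σ : Equiv.Perm (Fin k),
      (∏ q ∈ Finset.univ.filter fun q : Fin k × Fin k => q.1 < q.2,
        ((Yv (σ q.1) - Yv (σ q.2) +
            algebraMap (MvPolynomial (Fin k) ℂ) (RatField k) (C κ)) /
          (Yv (σ q.1) - Yv (σ q.2)))) * permMap σ f := rfl
  suffices h : (∑ σ : Equiv.Perm (Fin k), ρ σ f) = Fop k κ f by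
    rw [h, hFop]
  have hgen' : ∀ a b : Fin k, (a : ℕ) + 1 = (b : ℕ) → ρ (Equiv.swap a b) = Dem κ a b := by
    intro a b hab
    have hb : b = ⟨(a : ℕ) + 1, by rw [hab]; exact b.isLt⟩ := Fin.ext (by simp [hab.symm])
    rw [hb]
    exact hgen (a : ℕ) (by rw [hab]; exact b.isLt)
  have hk0 : (k.factorial : RatField k) ≠ 0 := by
    intro hc
    apply (Nat.cast_ne_zero (R := MvPolynomial (Fin k) ℂ)).mpr k.factorial_ne_zero
    apply algInj k
    rw [map_natCast, hc, map_zero]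
  set E := ∑ σ : Equiv.Perm (Fin k), ρ σ f with hE
  have hDemE : ∀ a b : Fin k, (a : ℕ) + 1 = (b : ℕ) → Dem κ a b E = E := by
    intro a b hab
    have hterm : ∀ σ : Equiv.Perm (Fin k),
        Dem κ a b (ρ σ f) = ρ (Equiv.swap a b * σ) f := by
      intro σ
      rw [← hgen' a b hab]
      exact (congrFun (hmul (Equiv.swap a b) σ) f).symm
    rw [hE, Dem_sum, Finset.sum_congr rfl (fun σ _ => hterm σ)]
    exact Equiv.sum_comp (Equiv.mulLeft (Equiv.swap a b)) (fun σ => ρ σ f)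
  have hpermE : ∀ g : Equiv.Perm (Fin k), permMap g E = E := by
    refine perm_induction (fun g => permMap g E = E) (permMap_one E) ?_ ?_
    · intro g h pg ph
      rw [← permMap_mul, ph, pg]
    · intro a b hab
      have habne : a ≠ b := fun h => by rw [h] at hab; omega
      exact fix_of_Dem_fix κ habne (hDemE a b hab)
  have hFopρ : ∀ σ : Equiv.Perm (Fin k), ∀ x : RatField k,
      Fop k κ (ρ σ x) = Fop k κ x := by
    refine perm_induction (fun σ => ∀ x : RatField k, Fop k κ (ρ σ x) = Fop k κ x)
      ?_ ?_ ?_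
    · intro x
      rw [hone]
      rfl
    · intro g h pg ph x
      have hx := congrFun (hmul g h) x
      rw [hx, Function.comp_apply, pg, ph]
    · intro a b hab x
      rw [hgen' a b hab]
      exact Fop_Dem κ hab x
  have hway1 : Fop k κ E = (k.factorial : RatField k) * Fop k κ f := by
    rw [hE, Fop_sum, Finset.sum_congr rfl (fun σ _ => hFopρ σ f), Finset.sum_const,
      Finset.card_univ, Fintype.card_perm, Fintype.card_fin, nsmul_eq_mul]
  have hway2 : Fop k κ E = (k.factorial : RatField k) * E := by
    unfold Fop
    rw [Finset.sum_congr rfl (fun σ _ => by rw [hpermE σ] :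
      ∀ σ ∈ Finset.univ, Acoef k κ σ * permMap σ E = Acoef k κ σ * E), ← Finset.sum_mul]
    congr 1
    have hYinj : Function.Injective (Yv (k := k)) := by
      intro i j h
      exact X_injective (algInj k h)
    have := sum_Acoef (algebraMap (MvPolynomial (Fin k) ℂ) (RatField k) (C κ)) k Yv hYinj
    unfold Acoef
    exact this
  exact mul_left_cancel₀ hk0 (hway2.symm.trans hway1)
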